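/- Let θ = (1+√13)/2 and ρ = 3/2. For every λ with 1/θ < λ ≤ 1, one has max{λθ, ρ(1 + 1/(θ/λ - 1)), λθ/2 + ρ} = λθ/2 + ρ = 1.5 + λ(1+√13)/4. -/

import Mathlib

theorem ssop_consistency_ratio (l : ℝ)
    (hθ : (1 + Real.sqrt 13) / 2 > 1)
    (hl1 : 1 / ((1 + Real.sqrt 13) / 2) < l) (hl2 : l ≤ 1) :
    let θ : ℝ := (1 + Real.sqrt 13) / 2
    let ρ : ℝ := 3 / 2
    max (l * θ) (max (ρ * (1 + 1 / (θ / l - 1))) (l * θ / 2 + ρ)) = l * θ / 2 + ρ ∧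
      l * θ / 2 + ρ = 1.5 + l * (1 + Real.sqrt 13) / 4 := by
  intro θ ρ
  have hs : Real.sqrt 13 ^ 2 = 13 := Real.sq_sqrt (by norm_num)
  have hs3 : (3 : ℝ) ≤ Real.sqrt 13 := by
    nlinarith [Real.sqrt_nonneg 13, hs]
  have hs4 : Real.sqrt 13 ≤ 4 := by
    nlinarith [Real.sqrt_nonneg 13, hs]
  have hθpos : (0 : ℝ) < θ := by positivity
  have hl0 : 0 < l := lt_trans (by positivity) hl1
  have hlθ : l < θ := lt_of_le_of_lt hl2 hθ
  have hd : 0 < θ / l - 1 := by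
    rw [sub_pos, lt_div_iff₀ hl0]
    simpa using hlθ
  have key : 1 / (θ / l - 1) = l / (θ - l) := by
    rw [div_sub' (ne_of_gt hl0), one_div_div, mul_one]
  constructor
  · rw [max_eq_right, max_eq_right]
    · -- ρ * (1 + l/(θ-l)) ≤ l*θ/2 + ρ
      rw [key]
      have hθl : 0 < θ - l := sub_pos.mpr hlθ
      have h1 : ρ * (l / (θ - l)) ≤ l * θ / 2 := by
        rw [mul_div_assoc', div_le_iff₀ hθl]
        have h0 : 0 ≤ l * ((1 + Real.sqrt 13) / 2) * (1 - l) :=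
          mul_nonneg (mul_nonneg hl0.le (by positivity)) (by linarith)
        simp only [θ, ρ]
        nlinarith [hs, h0, hs3]
      have := mul_add ρ 1 (l / (θ - l))
      nlinarith [h1]
    · -- l * θ ≤ max ...
      refine le_trans ?_ (le_max_right _ _)
      simp only [θ, ρ]
      nlinarith [hl0.le, hl2, hs4]
  · simp only [θ, ρ]; norm_num; ring
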